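/- Let σ(z) = 1/(1+e^{−z}) and, for p, q ∈ [0,1], let H²(p,q) = ½·[(√p − √q)² + (√(1−p) − √(1−q))²] denote the squared Hellinger distance between Bernoulli(p) and Bernoulli(q). Then: (i) for all p, q ∈ [0,1], H²(p,q) ≥ (p − q)²/2; and (ii) for every R̄ ≥ 0 and all u, v ∈ [−R̄, R̄], H²(σ(u), σ(v)) ≥ |u − v|² / (2·(1 + e^{R̄})⁴). -/

import Mathlib

open Real

/-- The _root_.sigmoid function `σ(z) = 1/(1+e^{−z})`. -/
noncomputable def sigmoid (z : ℝ) : ℝ := 1 / (1 + Real.exp (-z))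

/-- Squared Hellinger distance between `Bernoulli(p)` and `Bernoulli(q)`. -/
noncomputable def hellingerSq (p q : ℝ) : ℝ :=
  (1 / 2) * ((Real.sqrt p - Real.sqrt q) ^ 2 + (Real.sqrt (1 - p) - Real.sqrt (1 - q)) ^ 2)

lemma part_i (p q : ℝ) (hp : p ∈ Set.Icc (0 : ℝ) 1) (hq : q ∈ Set.Icc (0 : ℝ) 1) :
    (p - q) ^ 2 / 2 ≤ hellingerSq p q := by
  obtain ⟨hp0, hp1⟩ := hp; obtain ⟨hq0, hq1⟩ := hq
  have hx : Real.sqrt p ^ 2 = p := Real.sq_sqrt hp0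
  have hy : Real.sqrt q ^ 2 = q := Real.sq_sqrt hq0
  have hz : Real.sqrt (1 - p) ^ 2 = 1 - p := Real.sq_sqrt (by linarith)
  have hw : Real.sqrt (1 - q) ^ 2 = 1 - q := Real.sq_sqrt (by linarith)
  set x := Real.sqrt p; set y := Real.sqrt q
  set z := Real.sqrt (1 - p); set w := Real.sqrt (1 - q)
  have key : (x^2 - y^2)^2 ≤ (x - y)^2 + (z - w)^2 := by
    nlinarith [sq_nonneg (x*w - y*z), sq_nonneg (x*w + y*z), sq_nonneg (x - y),
      sq_nonneg (z - w), sq_nonneg (x*z - y*w)]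
  have : (p - q)^2 ≤ (x - y)^2 + (z - w)^2 := by rw [← hx, ← hy]; exact key
  unfold hellingerSq; linarith

lemma sigmoid_mem (z : ℝ) : _root_.sigmoid z ∈ Set.Icc (0 : ℝ) 1 := by
  have h : 0 < 1 + Real.exp (-z) := by positivity
  constructor
  · unfold _root_.sigmoid; positivity
  · unfold _root_.sigmoid
    rw [div_le_one h]
    nlinarith [Real.exp_pos (-z)]

lemma gap (R u v : ℝ) (hu : -R ≤ u) (hv : v ≤ R) (huv : u ≤ v) :
    (v - u) / (1 + Real.exp R) ^ 2 ≤ _root_.sigmoid v - _root_.sigmoid u := by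
  have hA : 0 < Real.exp (-u) := Real.exp_pos _
  have hB : 0 < Real.exp (-v) := Real.exp_pos _
  have hE : 0 < Real.exp v := Real.exp_pos _
  have hR : 0 < 1 + Real.exp R := by positivity
  have hdiff : _root_.sigmoid v - _root_.sigmoid u
      = (Real.exp (v - u) - 1) / ((1 + Real.exp (-u)) * (Real.exp v + 1)) := by
    unfold _root_.sigmoid
    rw [Real.exp_sub]
    have hv' : Real.exp (-v) = (Real.exp v)⁻¹ := by rw [Real.exp_neg]
    have hu' : Real.exp (-u) = (Real.exp u)⁻¹ := by rw [Real.exp_neg]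
    have hU : 0 < Real.exp u := Real.exp_pos _
    rw [hv', hu']
    field_simp
    ring
  rw [hdiff]
  have h1 : v - u ≤ Real.exp (v - u) - 1 := by
    nlinarith [Real.add_one_le_exp (v - u)]
  have hden : (1 + Real.exp (-u)) * (Real.exp v + 1) ≤ (1 + Real.exp R) ^ 2 := by
    have e1 : Real.exp (-u) ≤ Real.exp R := Real.exp_le_exp.2 (by linarith)
    have e2 : Real.exp v ≤ Real.exp R := Real.exp_le_exp.2 hv
    nlinarith
  have hdpos : 0 < (1 + Real.exp (-u)) * (Real.exp v + 1) := by positivity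
  have step : (v - u) / (1 + Real.exp R) ^ 2
      ≤ (v - u) / ((1 + Real.exp (-u)) * (Real.exp v + 1)) := by
    rcases le_or_gt (v - u) 0 with h | h
    · have h0 : v - u = 0 := le_antisymm h (by linarith)
      simp [h0]
    · exact div_le_div_of_nonneg_left (le_of_lt h) hdpos hden
  refine step.trans ?_
  exact div_le_div_of_nonneg_right h1 hdpos.le

lemma hellingerSq_comm (p q : ℝ) : hellingerSq p q = hellingerSq q p := by
  unfold hellingerSq; ring

lemma part_ii_aux (R u v : ℝ) (hR : 0 ≤ R) (hu : u ∈ Set.Icc (-R) R)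
    (hv : v ∈ Set.Icc (-R) R) (huv : u ≤ v) :
    |u - v| ^ 2 / (2 * (1 + Real.exp R) ^ 4) ≤ hellingerSq (_root_.sigmoid u) (_root_.sigmoid v) := by
  have hRpos : (0:ℝ) < 1 + Real.exp R := by positivity
  have hg := gap R u v hu.1 hv.2 huv
  have hb : 0 ≤ (v - u) / (1 + Real.exp R) ^ 2 := by
    apply div_nonneg (by linarith) (by positivity)
  have hsq : ((v - u) / (1 + Real.exp R) ^ 2) ^ 2 ≤ (_root_.sigmoid v - _root_.sigmoid u) ^ 2 :=
    pow_le_pow_left₀ hb hg 2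
  have habs : |u - v| ^ 2 = (v - u) ^ 2 := by
    rw [sq_abs]; ring
  have hrw : |u - v| ^ 2 / (2 * (1 + Real.exp R) ^ 4)
      = ((v - u) / (1 + Real.exp R) ^ 2) ^ 2 / 2 := by
    rw [habs]; field_simp
  rw [hrw]
  have := part_i (_root_.sigmoid u) (_root_.sigmoid v) (sigmoid_mem u) (sigmoid_mem v)
  have heq : (_root_.sigmoid u - _root_.sigmoid v) ^ 2 = (_root_.sigmoid v - _root_.sigmoid u) ^ 2 := by ring
  linarith

/-- (i) For all `p, q ∈ [0,1]`, `H²(p,q) ≥ (p − q)²/2`; and (ii) for every `R̄ ≥ 0` and all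
`u, v ∈ [−R̄, R̄]`, `H²(σ(u), σ(v)) ≥ |u − v|² / (2·(1 + e^{R̄})⁴)`. -/
theorem hellingerSq_lower_bounds :
    (∀ p ∈ Set.Icc (0 : ℝ) 1, ∀ q ∈ Set.Icc (0 : ℝ) 1,
      (p - q) ^ 2 / 2 ≤ hellingerSq p q) ∧
    (∀ R : ℝ, 0 ≤ R → ∀ u ∈ Set.Icc (-R) R, ∀ v ∈ Set.Icc (-R) R,
      |u - v| ^ 2 / (2 * (1 + Real.exp R) ^ 4) ≤ hellingerSq (_root_.sigmoid u) (_root_.sigmoid v)) := by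
  constructor
  · intro p hp q hq; exact part_i p q hp hq
  · intro R hR u hu v hv
    rcases le_total u v with h | h
    · exact part_ii_aux R u v hR hu hv h
    · have := part_ii_aux R v u hR hv hu h
      rw [hellingerSq_comm, abs_sub_comm] at this
      exact this
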